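/- Let δ > 0 and let ρ_1 be the stable subordinator of index α ∈ (0,1) at time 1, whose density is φ_α(t) = (1/π) ∫_0^∞ e^{−tu} e^{−u^α cos(πα)} sin(u^α sin(πα)) du. Then lim_{α→1⁻} log P(ρ_1 > 1+δ) / log(1/(1−α)) = −1. -/

import Mathlib

open Real Set Filter Topology MeasureTheory

private lemma int_exp_neg_mul_Ioi {b : ℝ} (hb : 0 < b) (a : ℝ) :
    ∫ x in Ioi a, Real.exp (-b*x) = Real.exp (-b*a)/b := by
  have := integral_Ioi_of_hasDerivAt_of_tendsto' (f := fun x => -Real.exp (-b*x)/b)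
    (f' := fun x => Real.exp (-b*x)) (a := a) (m := 0)
    (fun x _ => by
      have : HasDerivAt (fun x => Real.exp (-b*x)) (Real.exp (-b*x) * (-b)) x := by
        simpa [Function.comp_def] using
          (Real.hasDerivAt_exp (-b*x)).comp x ((hasDerivAt_id x).const_mul (-b))
      have h2 := (this.neg).div_const b
      refine h2.congr_deriv ?_
      rw [mul_neg, neg_neg, mul_div_assoc, div_self hb.ne', mul_one])
    (exp_neg_integrableOn_Ioi a hb)
    ?_
  · rw [this]; ring
  · rw [show (0:ℝ) = -0/b by simp]
    refine Tendsto.div_const (Tendsto.neg ?_) b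
    exact Real.tendsto_exp_atBot.comp (tendsto_id.const_mul_atTop_of_neg (neg_neg_iff_pos.mpr hb))

private lemma integrable_g {δ α : ℝ} (hδ : 0 < δ) (hα : α ∈ Ioo (0:ℝ) 1) :
    IntegrableOn (fun u : ℝ => u ^ (α-1) * Real.exp (-δ*u)) (Ioi (0:ℝ)) := by
  have hmeas : Measurable (fun u : ℝ => u ^ (α-1) * Real.exp (-δ*u)) := by fun_prop
  have h1 : IntegrableOn (fun u : ℝ => u ^ (α-1) * Real.exp (-δ*u)) (Ioc (0:ℝ) 1) := by
    rw [integrableOn_Ioc_iff_integrableOn_Ioo]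
    have hb : IntegrableOn (fun u : ℝ => u ^ (α-1)) (Ioo (0:ℝ) 1) :=
      (intervalIntegral.integrableOn_Ioo_rpow_iff zero_lt_one).mpr (by linarith [hα.1])
    refine hb.mono' hmeas.aestronglyMeasurable ?_
    · filter_upwards [ae_restrict_mem measurableSet_Ioo] with u hu
      have hu0 : (0:ℝ) < u := hu.1
      rw [Real.norm_of_nonneg (mul_nonneg (Real.rpow_nonneg hu0.le _) (Real.exp_pos _).le)]
      nlinarith [Real.exp_le_one_iff.mpr (by nlinarith : -δ*u ≤ 0),
        Real.rpow_pos_of_pos hu0 (α-1), Real.exp_pos (-δ*u)]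
  have h2 : IntegrableOn (fun u : ℝ => u ^ (α-1) * Real.exp (-δ*u)) (Ioi (1:ℝ)) := by
    refine (exp_neg_integrableOn_Ioi 1 hδ).mono' hmeas.aestronglyMeasurable ?_
    · filter_upwards [ae_restrict_mem measurableSet_Ioi] with u hu
      have hu1 : (1:ℝ) ≤ u := le_of_lt hu
      have h3 : u ^ (α-1) ≤ 1 := Real.rpow_le_one_of_one_le_of_nonpos hu1 (by linarith [hα.2])
      rw [Real.norm_of_nonneg (mul_nonneg (Real.rpow_nonneg (by linarith) _) (Real.exp_pos _).le)]
      nlinarith [Real.exp_pos (-δ*u), Real.rpow_nonneg (show (0:ℝ) ≤ u by linarith) (α-1)]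
  have := h1.union h2
  rwa [Ioc_union_Ioi_eq_Ioi zero_le_one] at this

noncomputable def Fi (δ α u : ℝ) : ℝ :=
  u ^ (α-1) * Real.exp (-δ*u) *
    (Real.exp (-u - u^α * Real.cos (π*α)) * Real.sin (u^α * Real.sin (π*α)) /
      (u^α * Real.sin (π*α)))

private lemma sin_pa_pos {α : ℝ} (hα : α ∈ Ioo (0:ℝ) 1) : 0 < Real.sin (π*α) :=
  Real.sin_pos_of_pos_of_lt_pi (by nlinarith [Real.pi_pos, hα.1])
    (by nlinarith [Real.pi_pos, hα.2])

private lemma sin_pa_le {α : ℝ} (hα : α ∈ Ioo (0:ℝ) 1) : Real.sin (π*α) ≤ π*(1-α) := by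
  have h : Real.sin (π*α) = Real.sin (π*(1-α)) := by
    rw [show π*(1-α) = π - π*α by ring, Real.sin_pi_sub]
  rw [h]
  exact Real.sin_le (by nlinarith [Real.pi_pos, hα.2])

private lemma absF_le {δ α : ℝ} (hα : α ∈ Ioo (0:ℝ) 1) {u : ℝ} (hu : 0 < u) :
    |Fi δ α u| ≤ Real.exp 1 * (u ^ (α-1) * Real.exp (-δ*u)) := by
  have hs : 0 < Real.sin (π*α) := sin_pa_pos hα
  have hua : 0 < u^α := Real.rpow_pos_of_pos hu α
  set x := u^α * Real.sin (π*α) with hx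
  have hx0 : 0 < x := mul_pos hua hs
  have hsin : |Real.sin x| ≤ x := by
    rcases le_total x 1 with h | h
    · have : 0 ≤ Real.sin x :=
        Real.sin_nonneg_of_nonneg_of_le_pi hx0.le (by nlinarith [Real.pi_gt_three])
      rw [abs_of_nonneg this]; exact Real.sin_le hx0.le
    · calc |Real.sin x| ≤ 1 := abs_le.mpr ⟨Real.neg_one_le_sin x, Real.sin_le_one x⟩
        _ ≤ x := h
  have hE : -u - u^α * Real.cos (π*α) ≤ 1 := by
    have h1 : -u^α * Real.cos (π*α) ≤ u^α := by
      nlinarith [Real.neg_one_le_cos (π*α)]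
    have h2 : u^α - u ≤ 1 := by
      rcases le_total u 1 with h | h
      · nlinarith [Real.rpow_le_one hu.le h (le_of_lt hα.1)]
      · have : u ^ α ≤ u := by
          calc u ^ α ≤ u ^ (1:ℝ) := Real.rpow_le_rpow_of_exponent_le h (le_of_lt hα.2)
            _ = u := Real.rpow_one u
        nlinarith
    nlinarith
  have hg0 : 0 ≤ u ^ (α-1) * Real.exp (-δ*u) :=
    mul_nonneg (Real.rpow_nonneg hu.le _) (Real.exp_pos _).le
  rw [Fi, abs_mul, abs_of_nonneg hg0, abs_div, abs_of_pos hx0, abs_mul, Real.abs_exp]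
  have hbr : Real.exp (-u - u^α * Real.cos (π*α)) * |Real.sin x| / x ≤ Real.exp 1 * 1 := by
    rw [div_le_iff₀ hx0]
    have he : Real.exp (-u - u^α * Real.cos (π*α)) ≤ Real.exp 1 := Real.exp_le_exp.mpr hE
    nlinarith [Real.exp_pos (-u - u^α * Real.cos (π*α)), abs_nonneg (Real.sin x)]
  calc u ^ (α-1) * Real.exp (-δ*u) * (Real.exp (-u - u^α * Real.cos (π*α)) * |Real.sin x| / x)
      ≤ u ^ (α-1) * Real.exp (-δ*u) * (Real.exp 1 * 1) := by
        exact mul_le_mul_of_nonneg_left hbr hg0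
    _ = Real.exp 1 * (u ^ (α-1) * Real.exp (-δ*u)) := by ring

private lemma measF {δ α : ℝ} : Measurable (Fi δ α) := by unfold Fi; fun_prop

private lemma integrable_F {δ α : ℝ} (hδ : 0 < δ) (hα : α ∈ Ioo (0:ℝ) 1) :
    IntegrableOn (Fi δ α) (Ioi (0:ℝ)) := by
  refine (((integrable_g hδ hα).const_mul (Real.exp 1)).mono'
    measF.aestronglyMeasurable ?_)
  filter_upwards [ae_restrict_mem measurableSet_Ioi] with u hu
  rw [Real.norm_eq_abs]
  exact absF_le hα hu

private lemma int_rpow_Ioc {α : ℝ} (hα : 0 < α) :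
    ∫ u in Ioc (0:ℝ) 1, u ^ (α-1) = 1/α := by
  rw [← intervalIntegral.integral_of_le zero_le_one,
    integral_rpow (Or.inl (by linarith : (-1:ℝ) < α - 1))]
  rw [show α - 1 + 1 = α by ring, Real.one_rpow, Real.zero_rpow (ne_of_gt hα)]
  ring

private lemma int_split {δ α : ℝ} (hδ : 0 < δ) (hα : α ∈ Ioo (0:ℝ) 1) :
    ∫ u in Ioi (0:ℝ), Fi δ α u =
      (∫ u in Ioc (0:ℝ) 1, Fi δ α u) + ∫ u in Ioi (1:ℝ), Fi δ α u := by
  rw [← setIntegral_union (Ioc_disjoint_Ioi le_rfl) measurableSet_Ioi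
    ((integrable_F hδ hα).mono_set Ioc_subset_Ioi_self)
    ((integrable_F hδ hα).mono_set (Ioi_subset_Ioi zero_le_one)),
    Ioc_union_Ioi_eq_Ioi zero_le_one]

private lemma upper_I {δ α : ℝ} (hδ : 0 < δ) (hα : α ∈ Ioo (0:ℝ) 1) (h2 : 1/2 ≤ α) :
    ∫ u in Ioi (0:ℝ), Fi δ α u ≤ Real.exp 1 * (2 + 1/δ) := by
  have hg := integrable_g hδ hα
  have key : ∫ u in Ioi (0:ℝ), Fi δ α u ≤
      Real.exp 1 * ∫ u in Ioi (0:ℝ), u ^ (α-1) * Real.exp (-δ*u) := by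
    rw [← integral_const_mul]
    refine setIntegral_mono_on (integrable_F hδ hα) (hg.const_mul _) measurableSet_Ioi ?_
    intro u hu
    calc Fi δ α u ≤ |Fi δ α u| := le_abs_self _
      _ ≤ Real.exp 1 * (u ^ (α-1) * Real.exp (-δ*u)) := absF_le hα hu
  refine key.trans ?_
  have hIg : ∫ u in Ioi (0:ℝ), u ^ (α-1) * Real.exp (-δ*u) ≤ 2 + 1/δ := by
    have hsplit : ∫ u in Ioi (0:ℝ), u ^ (α-1) * Real.exp (-δ*u) =
        (∫ u in Ioc (0:ℝ) 1, u ^ (α-1) * Real.exp (-δ*u)) +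
          ∫ u in Ioi (1:ℝ), u ^ (α-1) * Real.exp (-δ*u) := by
      rw [← setIntegral_union (Ioc_disjoint_Ioi le_rfl) measurableSet_Ioi
        (hg.mono_set Ioc_subset_Ioi_self) (hg.mono_set (Ioi_subset_Ioi zero_le_one)),
        Ioc_union_Ioi_eq_Ioi zero_le_one]
    have hb1 : ∫ u in Ioc (0:ℝ) 1, u ^ (α-1) * Real.exp (-δ*u) ≤ 2 := by
      have hint : IntegrableOn (fun u : ℝ => u ^ (α-1)) (Ioc (0:ℝ) 1) := by
        rw [integrableOn_Ioc_iff_integrableOn_Ioo]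
        exact (intervalIntegral.integrableOn_Ioo_rpow_iff zero_lt_one).mpr
          (by linarith [hα.1])
      calc ∫ u in Ioc (0:ℝ) 1, u ^ (α-1) * Real.exp (-δ*u)
          ≤ ∫ u in Ioc (0:ℝ) 1, u ^ (α-1) := by
            refine setIntegral_mono_on (hg.mono_set Ioc_subset_Ioi_self) hint
              measurableSet_Ioc ?_
            intro u hu
            have h1 : Real.exp (-δ*u) ≤ 1 :=
              Real.exp_le_one_iff.mpr (by nlinarith [hu.1])
            nlinarith [Real.rpow_nonneg hu.1.le (α-1), Real.exp_pos (-δ*u)]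
        _ = 1/α := int_rpow_Ioc hα.1
        _ ≤ 2 := by rw [div_le_iff₀ hα.1]; linarith
    have hb2 : ∫ u in Ioi (1:ℝ), u ^ (α-1) * Real.exp (-δ*u) ≤ 1/δ := by
      calc ∫ u in Ioi (1:ℝ), u ^ (α-1) * Real.exp (-δ*u)
          ≤ ∫ u in Ioi (1:ℝ), Real.exp (-δ*u) := by
            refine setIntegral_mono_on (hg.mono_set (Ioi_subset_Ioi zero_le_one))
              (exp_neg_integrableOn_Ioi 1 hδ) measurableSet_Ioi ?_
            intro u hu
            have h1 : u ^ (α-1) ≤ 1 :=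
              Real.rpow_le_one_of_one_le_of_nonpos hu.le (by linarith [hα.2])
            nlinarith [Real.exp_pos (-δ*u), Real.rpow_nonneg
              (show (0:ℝ) ≤ u by linarith [(Set.mem_Ioi.mp hu).le]) (α-1)]
        _ = Real.exp (-δ*1)/δ := int_exp_neg_mul_Ioi hδ 1
        _ ≤ 1/δ := by
            gcongr
            exact Real.exp_le_one_iff.mpr (by nlinarith : -δ*1 ≤ 0)
    linarith [hsplit]
  nlinarith [Real.exp_pos (1:ℝ), hIg,
    (by positivity : (0:ℝ) < Real.exp 1)]

private lemma ptwise_Ioc {δ α : ℝ} (hδ : 0 < δ) (hα : α ∈ Ioo (0:ℝ) 1) (h2 : 1/2 ≤ α)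
    (hπ : π*(1-α) ≤ 1) {u : ℝ} (hu : u ∈ Ioc (0:ℝ) 1) :
    3/4 * Real.exp (-(1+δ)) * u ^ (α-1) ≤ Fi δ α u := by
  obtain ⟨hu0, hu1⟩ := hu
  have hs : 0 < Real.sin (π*α) := sin_pa_pos hα
  have hua : 0 < u^α := Real.rpow_pos_of_pos hu0 α
  set x := u^α * Real.sin (π*α) with hx
  have hx0 : 0 < x := mul_pos hua hs
  have hx1 : x ≤ 1 := by
    have h1 : u^α ≤ 1 := Real.rpow_le_one hu0.le hu1 (le_of_lt hα.1)
    have h2' : Real.sin (π*α) ≤ 1 := (sin_pa_le hα).trans hπ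
    nlinarith
  have hsinc : 3/4 * x ≤ Real.sin x := by
    nlinarith [Real.sin_gt_sub_cube hx0,
      mul_nonneg (mul_nonneg hx0.le (by linarith : (0:ℝ) ≤ 1-x)) (by linarith : (0:ℝ) ≤ 1+x)]
  have hcos : Real.cos (π*α) ≤ 0 := by
    refine Real.cos_nonpos_of_pi_div_two_le_of_le ?_ ?_
    · nlinarith [Real.pi_pos]
    · nlinarith [Real.pi_pos, hα.2]
  have hE : -(1:ℝ) ≤ -u - u^α * Real.cos (π*α) := by nlinarith
  have hA : Real.exp (-δ) ≤ Real.exp (-δ*u) := Real.exp_le_exp.mpr (by nlinarith)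
  have hB : Real.exp (-1) ≤ Real.exp (-u - u^α * Real.cos (π*α)) := Real.exp_le_exp.mpr hE
  have hS : 3/4 ≤ Real.sin x / x := by
    rw [le_div_iff₀ hx0]; linarith
  have hbr : 3/4 * Real.exp (-(1+δ)) ≤
      Real.exp (-δ*u) * (Real.exp (-u - u^α * Real.cos (π*α)) * Real.sin x / x) := by
    have h1 : Real.exp (-(1+δ)) = Real.exp (-δ) * Real.exp (-1) := by
      rw [← Real.exp_add]; ring_nf
    have hApos : 0 < Real.exp (-δ) := Real.exp_pos _
    have hBpos : 0 < Real.exp (-1:ℝ) := Real.exp_pos _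
    have hSpos : (0:ℝ) < 3/4 := by norm_num
    rw [h1, mul_div_assoc]
    nlinarith [Real.exp_pos (-δ*u), Real.exp_pos (-u - u^α * Real.cos (π*α)),
      mul_le_mul hB hS hSpos.le (Real.exp_pos _).le,
      mul_le_mul hA (mul_le_mul hB hS hSpos.le (Real.exp_pos _).le)
        (by nlinarith) (Real.exp_pos _).le]
  calc 3/4 * Real.exp (-(1+δ)) * u ^ (α-1)
      = u ^ (α-1) * (3/4 * Real.exp (-(1+δ))) := by ring
    _ ≤ u ^ (α-1) * (Real.exp (-δ*u) *
        (Real.exp (-u - u^α * Real.cos (π*α)) * Real.sin x / x)) :=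
        mul_le_mul_of_nonneg_left hbr (Real.rpow_nonneg hu0.le _)
    _ = Fi δ α u := by rw [Fi]; ring

private lemma ptwise_Ioi {δ α : ℝ} (hδ : 0 < δ) (hα : α ∈ Ioo (0:ℝ) 1)
    {u : ℝ} (hu : u ∈ Ioi (1:ℝ)) :
    -(1/π * Real.exp (-δ/(2*(1-α))) * Real.exp (-(δ/2)*u)) ≤ Fi δ α u := by
  have hu1 : (1:ℝ) < u := hu
  have hu0 : (0:ℝ) < u := by linarith
  have hs : 0 < Real.sin (π*α) := sin_pa_pos hα
  have hua : 0 < u^α := Real.rpow_pos_of_pos hu0 α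
  have hπ : (0:ℝ) < π := Real.pi_pos
  set x := u^α * Real.sin (π*α) with hx
  have hx0 : 0 < x := mul_pos hua hs
  rcases le_or_gt 0 (Real.sin x) with hsx | hsx
  · have h1 : 0 ≤ Fi δ α u := by
      rw [Fi]
      have : 0 ≤ Real.exp (-u - u^α * Real.cos (π*α)) * Real.sin x / x :=
        div_nonneg (mul_nonneg (Real.exp_pos _).le hsx) hx0.le
      positivity
    have h2 : (0:ℝ) ≤ 1/π * Real.exp (-δ/(2*(1-α))) * Real.exp (-(δ/2)*u) := by positivity
    linarith
  · -- sin x < 0, so x > π and u > 1/(1-α)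
    have hxπ : π < x := by
      by_contra h
      push_neg at h
      exact absurd (Real.sin_nonneg_of_nonneg_of_le_pi hx0.le h) (not_le.mpr hsx)
    have huα : u^α ≤ u := by
      calc u^α ≤ u ^ (1:ℝ) := Real.rpow_le_rpow_of_exponent_le hu1.le (le_of_lt hα.2)
        _ = u := Real.rpow_one u
    have hM : 1/(1-α) < u := by
      have hsle : Real.sin (π*α) ≤ π*(1-α) := sin_pa_le hα
      have h1α : (0:ℝ) < 1-α := by linarith [hα.2]
      have h1 : π < u^α * (π*(1-α)) := by nlinarith
      have h2 : 1/(1-α) < u^α := by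
        rw [div_lt_iff₀ h1α]; nlinarith
      linarith
    have habs : |Fi δ α u| ≤ Real.exp (-δ*u) * (1/π) := by
      have h1 : u ^ (α-1) ≤ 1 :=
        Real.rpow_le_one_of_one_le_of_nonpos hu1.le (by linarith [hα.2])
      have hE : -u - u^α * Real.cos (π*α) ≤ 0 := by
        nlinarith [Real.neg_one_le_cos (π*α)]
      have hB : Real.exp (-u - u^α * Real.cos (π*α)) ≤ 1 := Real.exp_le_one_iff.mpr hE
      have hsin1 : |Real.sin x| ≤ 1 := abs_le.mpr ⟨Real.neg_one_le_sin x, Real.sin_le_one x⟩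
      have hg0 : 0 ≤ u ^ (α-1) * Real.exp (-δ*u) :=
        mul_nonneg (Real.rpow_nonneg hu0.le _) (Real.exp_pos _).le
      rw [Fi, abs_mul, abs_of_nonneg hg0, abs_div, abs_of_pos hx0, abs_mul, Real.abs_exp]
      have hfrac : Real.exp (-u - u^α * Real.cos (π*α)) * |Real.sin x| / x ≤ 1/π := by
        rw [div_le_div_iff₀ hx0 hπ]
        nlinarith [mul_le_mul hB hsin1 (abs_nonneg _) zero_le_one, hxπ,
          Real.exp_pos (-u - u^α * Real.cos (π*α)), abs_nonneg (Real.sin x)]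
      have hfr0 : (0:ℝ) ≤ Real.exp (-u - u^α * Real.cos (π*α)) * |Real.sin x| / x :=
        div_nonneg (mul_nonneg (Real.exp_pos _).le (abs_nonneg _)) hx0.le
      calc u ^ (α-1) * Real.exp (-δ*u) *
            (Real.exp (-u - u^α * Real.cos (π*α)) * |Real.sin x| / x)
          ≤ 1 * Real.exp (-δ*u) * (1/π) :=
            mul_le_mul (by nlinarith [Real.exp_pos (-δ*u)]) hfrac hfr0 (by positivity)
        _ = Real.exp (-δ*u) * (1/π) := by ring
    have hsplit : Real.exp (-δ*u) ≤ Real.exp (-δ/(2*(1-α))) * Real.exp (-(δ/2)*u) := by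
      rw [← Real.exp_add]
      refine Real.exp_le_exp.mpr ?_
      have h1α : (0:ℝ) < 1-α := by linarith [hα.2]
      have hu1α : 1 < u * (1-α) := (div_lt_iff₀ h1α).mp hM
      have hkey : δ/(2*(1-α)) ≤ (δ/2)*u := by
        rw [div_le_iff₀ (by positivity)]
        nlinarith
      have he : -δ/(2*(1-α)) = -(δ/(2*(1-α))) := by ring
      rw [he]
      nlinarith
    calc -(1/π * Real.exp (-δ/(2*(1-α))) * Real.exp (-(δ/2)*u))
        ≤ -(Real.exp (-δ*u) * (1/π)) := by
          have hm := mul_le_mul_of_nonneg_left hsplit (by positivity : (0:ℝ) ≤ 1/π)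
          nlinarith [hm]
      _ ≤ -|Fi δ α u| := neg_le_neg habs
      _ ≤ Fi δ α u := neg_abs_le _

private lemma lower_I {δ α : ℝ} (hδ : 0 < δ) (hα : α ∈ Ioo (0:ℝ) 1) (h2 : 1/2 ≤ α)
    (hπ1 : π*(1-α) ≤ 1) :
    3/4 * Real.exp (-(1+δ)) - 2/(π*δ) * Real.exp (-δ/(2*(1-α))) ≤
      ∫ u in Ioi (0:ℝ), Fi δ α u := by
  have hπ0 : (0:ℝ) < π := Real.pi_pos
  have hint : IntegrableOn (fun u : ℝ => u ^ (α-1)) (Ioc (0:ℝ) 1) := by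
    rw [integrableOn_Ioc_iff_integrableOn_Ioo]
    exact (intervalIntegral.integrableOn_Ioo_rpow_iff zero_lt_one).mpr (by linarith [hα.1])
  have hA : 3/4 * Real.exp (-(1+δ)) ≤ ∫ u in Ioc (0:ℝ) 1, Fi δ α u := by
    have hmono : ∫ u in Ioc (0:ℝ) 1, 3/4 * Real.exp (-(1+δ)) * u ^ (α-1) ≤
        ∫ u in Ioc (0:ℝ) 1, Fi δ α u := by
      refine setIntegral_mono_on (hint.const_mul _)
        ((integrable_F hδ hα).mono_set Ioc_subset_Ioi_self) measurableSet_Ioc ?_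
      exact fun u hu => ptwise_Ioc hδ hα h2 hπ1 hu
    have hval : ∫ u in Ioc (0:ℝ) 1, 3/4 * Real.exp (-(1+δ)) * u ^ (α-1) =
        3/4 * Real.exp (-(1+δ)) * (1/α) := by
      rw [← int_rpow_Ioc hα.1, ← integral_const_mul]
    have h1α : (1:ℝ) ≤ 1/α := by
      rw [le_div_iff₀ hα.1]; linarith [hα.2]
    nlinarith [hmono, hval, Real.exp_pos (-(1+δ))]
  have hB : -(2/(π*δ) * Real.exp (-δ/(2*(1-α)))) ≤ ∫ u in Ioi (1:ℝ), Fi δ α u := by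
    set k := 1/π * Real.exp (-δ/(2*(1-α))) with hk
    have hk0 : 0 < k := by positivity
    have hintk : IntegrableOn (fun u : ℝ => -(k * Real.exp (-(δ/2)*u))) (Ioi (1:ℝ)) :=
      ((exp_neg_integrableOn_Ioi 1 (half_pos hδ)).const_mul k).neg
    have hmono : ∫ u in Ioi (1:ℝ), -(k * Real.exp (-(δ/2)*u)) ≤
        ∫ u in Ioi (1:ℝ), Fi δ α u := by
      refine setIntegral_mono_on hintk
        ((integrable_F hδ hα).mono_set (Ioi_subset_Ioi zero_le_one)) measurableSet_Ioi ?_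
      intro u hu
      have := ptwise_Ioi hδ hα hu
      calc -(k * Real.exp (-(δ/2)*u))
          = -(1/π * Real.exp (-δ/(2*(1-α))) * Real.exp (-(δ/2)*u)) := by rw [hk]
        _ ≤ Fi δ α u := this
    have hval : ∫ u in Ioi (1:ℝ), -(k * Real.exp (-(δ/2)*u)) =
        -(k * (Real.exp (-(δ/2)*1)/(δ/2))) := by
      rw [integral_neg, integral_const_mul, int_exp_neg_mul_Ioi (half_pos hδ) 1]
    have hfinal : -(2/(π*δ) * Real.exp (-δ/(2*(1-α)))) ≤
        -(k * (Real.exp (-(δ/2)*1)/(δ/2))) := by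
      have h1 : Real.exp (-(δ/2)*1) ≤ 1 := Real.exp_le_one_iff.mpr (by nlinarith)
      have hE : (0:ℝ) < Real.exp (-δ/(2*(1-α))) := Real.exp_pos _
      have hEx : (0:ℝ) < Real.exp (-(δ/2)*1) := Real.exp_pos _
      rw [neg_le_neg_iff, hk]
      have expand : 1/π * Real.exp (-δ/(2*(1-α))) * (Real.exp (-(δ/2)*1)/(δ/2)) =
          Real.exp (-δ/(2*(1-α))) * Real.exp (-(δ/2)*1) * (2/(π*δ)) := by
        field_simp
      rw [expand]
      have h2 : Real.exp (-δ/(2*(1-α))) * Real.exp (-(δ/2)*1) ≤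
          Real.exp (-δ/(2*(1-α))) * 1 := by
        exact mul_le_mul_of_nonneg_left h1 hE.le
      nlinarith [mul_le_mul_of_nonneg_right h2 (by positivity : (0:ℝ) ≤ 2/(π*δ))]
    linarith [hmono, hval.symm.le, hval.le]
  rw [int_split hδ hα]
  linarith

theorem stmt_11 (δ : ℝ) (hδ : 0 < δ)
    (q : ℝ → ℝ)
    (hq : ∀ α ∈ Ioo (0 : ℝ) 1,
      q α = (Real.sin (π * α) / π) *
        ∫ u in Ioi (0 : ℝ),
          u ^ (-(1 - α)) * Real.exp (-δ * u) *
            (Real.exp (-u - u ^ α * Real.cos (π * α)) *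
              Real.sin (u ^ α * Real.sin (π * α)) / (u ^ α * Real.sin (π * α)))) :
    Tendsto (fun α : ℝ => Real.log (q α) / Real.log (1 / (1 - α)))
      (𝓝[Ioo (0 : ℝ) 1] 1) (𝓝 (-1)) := by
  have hπ0 : (0:ℝ) < π := Real.pi_pos
  set Cq : ℝ := Real.exp 1 * (2 + 1/δ) with hCq
  set cq : ℝ := 1/2 * Real.exp (-(1+δ)) with hcq
  have hcq0 : 0 < cq := by positivity
  have hCq0 : 0 < Cq := by positivity
  -- the filter facts
  have h1α : Tendsto (fun α : ℝ => 1-α) (𝓝[Ioo (0:ℝ) 1] 1) (𝓝[>] 0) := by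
    apply tendsto_nhdsWithin_of_tendsto_nhds_of_eventually_within
    · have : Tendsto (fun α : ℝ => 1-α) (𝓝 1) (𝓝 (1-1)) :=
        (continuous_const.sub continuous_id).tendsto 1
      simpa using this.mono_left nhdsWithin_le_nhds
    · filter_upwards [self_mem_nhdsWithin] with a ha
      exact sub_pos.mpr ha.2
  have hLtop : Tendsto (fun α : ℝ => Real.log (1/(1-α))) (𝓝[Ioo (0:ℝ) 1] 1) atTop := by
    have h2 := tendsto_inv_nhdsGT_zero.comp h1α
    have := Real.tendsto_log_atTop.comp h2
    simpa [one_div, Function.comp_def] using this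
  have E2 : ∀ᶠ α in 𝓝[Ioo (0:ℝ) 1] 1, (1:ℝ)/2 ≤ α := by
    apply eventually_nhdsWithin_of_eventually_nhds
    filter_upwards [eventually_gt_nhds (by norm_num : (1:ℝ)/2 < 1)] with α hα
    exact hα.le
  have E3 : ∀ᶠ α in 𝓝[Ioo (0:ℝ) 1] 1, π*(1-α) ≤ 1 := by
    apply eventually_nhdsWithin_of_eventually_nhds
    have hcont : Tendsto (fun α : ℝ => π*(1-α)) (𝓝 1) (𝓝 (π*(1-1))) :=
      (continuous_const.mul (continuous_const.sub continuous_id)).tendsto 1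
    have : Tendsto (fun α : ℝ => π*(1-α)) (𝓝 1) (𝓝 0) := by simpa using hcont
    exact this.eventually (eventually_le_nhds (by norm_num))
  have E4 : ∀ᶠ α in 𝓝[Ioo (0:ℝ) 1] 1,
      2/(π*δ) * Real.exp (-δ/(2*(1-α))) ≤ 1/4 * Real.exp (-(1+δ)) := by
    have hbot : Tendsto (fun α : ℝ => -δ/(2*(1-α))) (𝓝[Ioo (0:ℝ) 1] 1) atBot := by
      have h2 := tendsto_inv_nhdsGT_zero.comp h1α
      have h3 : Tendsto (fun α : ℝ => (-δ/2) * (1-α)⁻¹) (𝓝[Ioo (0:ℝ) 1] 1) atBot :=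
        h2.const_mul_atTop_of_neg (by linarith)
      refine h3.congr (fun α => ?_)
      show (-δ/2) * (1-α)⁻¹ = -δ/(2*(1-α))
      rw [div_eq_mul_inv, div_eq_mul_inv, mul_inv]
      ring
    have hexp : Tendsto (fun α : ℝ => 2/(π*δ) * Real.exp (-δ/(2*(1-α))))
        (𝓝[Ioo (0:ℝ) 1] 1) (𝓝 (2/(π*δ) * 0)) :=
      (Real.tendsto_exp_atBot.comp hbot).const_mul _
    rw [mul_zero] at hexp
    exact hexp.eventually (eventually_le_nhds (by positivity))
  -- main eventual bounds on log (q α)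
  have hEv : ∀ᶠ α in 𝓝[Ioo (0:ℝ) 1] 1,
      Real.log (1-α) + Real.log (2*cq/π) ≤ Real.log (q α) ∧
      Real.log (q α) ≤ Real.log (1-α) + Real.log Cq := by
    filter_upwards [self_mem_nhdsWithin, E2, E3, E4] with α hαI h2 h3 h4
    have hα0 : (0:ℝ) < α := hαI.1
    have h1a : (0:ℝ) < 1-α := by linarith [hαI.2]
    have hs : 0 < Real.sin (π*α) := sin_pa_pos hαI
    have hsle : Real.sin (π*α) ≤ π*(1-α) := sin_pa_le hαI
    have hsge : 2*(1-α) ≤ Real.sin (π*α) := by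
      have hJ := Real.mul_le_sin (x := π*(1-α)) (by positivity) (by nlinarith)
      have heq : Real.sin (π*(1-α)) = Real.sin (π*α) := by
        rw [show π*(1-α) = π - π*α by ring, Real.sin_pi_sub]
      have h2π : 2/π * (π*(1-α)) = 2*(1-α) := by field_simp
      rw [heq, h2π] at hJ
      exact hJ
    have hq' : q α = Real.sin (π*α)/π * ∫ u in Ioi (0:ℝ), Fi δ α u := by
      rw [hq α hαI]
      simp only [Fi, neg_sub]
    have hIup : ∫ u in Ioi (0:ℝ), Fi δ α u ≤ Cq := upper_I hδ hαI h2
    have hIlo : cq ≤ ∫ u in Ioi (0:ℝ), Fi δ α u := by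
      have := lower_I hδ hαI h2 h3
      rw [hcq]
      linarith
    have key : 2*(1-α)*cq ≤ Real.sin (π*α) * ∫ u in Ioi (0:ℝ), Fi δ α u :=
      mul_le_mul hsge hIlo hcq0.le hs.le
    have key2 : Real.sin (π*α) * (∫ u in Ioi (0:ℝ), Fi δ α u) ≤ (π*(1-α)) * Cq :=
      mul_le_mul hsle hIup (le_trans hcq0.le hIlo) (by positivity)
    have hqlo : (1-α) * (2*cq/π) ≤ q α := by
      rw [hq', div_mul_eq_mul_div, le_div_iff₀ hπ0]
      have hcancel : (1-α)*(2*cq/π)*π = 2*(1-α)*cq := by field_simp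
      rw [hcancel]
      exact key
    have hqhi : q α ≤ (1-α) * Cq := by
      rw [hq', div_mul_eq_mul_div, div_le_iff₀ hπ0]
      nlinarith [key2]
    have hqpos : 0 < q α := lt_of_lt_of_le (by positivity) hqlo
    constructor
    · have := Real.log_le_log (by positivity) hqlo
      rwa [Real.log_mul h1a.ne' (by positivity)] at this
    · have := Real.log_le_log hqpos hqhi
      rwa [Real.log_mul h1a.ne' hCq0.ne'] at this
  -- squeeze
  have hlow : Tendsto (fun α : ℝ => -1 + Real.log (2*cq/π) / Real.log (1/(1-α)))
      (𝓝[Ioo (0:ℝ) 1] 1) (𝓝 (-1)) := by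
    have := (tendsto_const_nhds (x := Real.log (2*cq/π))
      (f := 𝓝[Ioo (0:ℝ) 1] 1)).div_atTop hLtop
    simpa using (tendsto_const_nhds (x := (-1:ℝ))).add this
  have hhigh : Tendsto (fun α : ℝ => -1 + Real.log Cq / Real.log (1/(1-α)))
      (𝓝[Ioo (0:ℝ) 1] 1) (𝓝 (-1)) := by
    have := (tendsto_const_nhds (x := Real.log Cq)
      (f := 𝓝[Ioo (0:ℝ) 1] 1)).div_atTop hLtop
    simpa using (tendsto_const_nhds (x := (-1:ℝ))).add this
  refine tendsto_of_tendsto_of_tendsto_of_le_of_le' hlow hhigh ?_ ?_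
  · filter_upwards [hEv, self_mem_nhdsWithin] with α hE hmem
    have h1a : (0:ℝ) < 1-α := by linarith [hmem.2]
    have hL : 0 < Real.log (1/(1-α)) :=
      Real.log_pos ((one_lt_div h1a).mpr (by linarith [hmem.1]))
    have hLeq : Real.log (1-α) = -Real.log (1/(1-α)) := by
      rw [one_div, Real.log_inv, neg_neg]
    have hnum : -Real.log (1/(1-α)) + Real.log (2*cq/π) ≤ Real.log (q α) := by
      rw [← hLeq]; exact hE.1
    calc -1 + Real.log (2*cq/π) / Real.log (1/(1-α))
        = (-Real.log (1/(1-α)) + Real.log (2*cq/π)) / Real.log (1/(1-α)) := by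
          field_simp
      _ ≤ Real.log (q α) / Real.log (1/(1-α)) := by gcongr
  · filter_upwards [hEv, self_mem_nhdsWithin] with α hE hmem
    have h1a : (0:ℝ) < 1-α := by linarith [hmem.2]
    have hL : 0 < Real.log (1/(1-α)) :=
      Real.log_pos ((one_lt_div h1a).mpr (by linarith [hmem.1]))
    have hLeq : Real.log (1-α) = -Real.log (1/(1-α)) := by
      rw [one_div, Real.log_inv, neg_neg]
    have hnum : Real.log (q α) ≤ -Real.log (1/(1-α)) + Real.log Cq := by
      rw [← hLeq]; exact hE.2
    calc Real.log (q α) / Real.log (1/(1-α))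
        ≤ (-Real.log (1/(1-α)) + Real.log Cq) / Real.log (1/(1-α)) := by gcongr
      _ = -1 + Real.log Cq / Real.log (1/(1-α)) := by field_simp
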